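/- Let F : [0,1]^n → ℝ be differentiable, monotone, and up-concave. Then for all x, y ∈ [0,1]^n, F(y) − F(x) ≤ ⟨∇F(x), y⟩, where ⟨·,·⟩ is the Euclidean inner product. -/

import Mathlib

open scoped RealInnerProductSpace

/-- The unit cube `[0,1]^n` in `ℝⁿ` (with the Euclidean norm). -/
def cube (n : ℕ) : Set (EuclideanSpace ℝ (Fin n)) :=
  {x | ∀ i, x i ∈ Set.Icc (0:ℝ) 1}

lemma inner_grad {n : ℕ} (F : EuclideanSpace ℝ (Fin n) → ℝ)
    (x v : EuclideanSpace ℝ (Fin n)) :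
    ⟪gradient F x, v⟫ = fderiv ℝ F x v := by
  simp [gradient, InnerProductSpace.toDual_symm_apply]

lemma line_deriv {n : ℕ} (F : EuclideanSpace ℝ (Fin n) → ℝ)
    (hdiff : Differentiable ℝ F) (x d : EuclideanSpace ℝ (Fin n)) :
    HasDerivAt (fun t : ℝ => F (x + t • d)) (fderiv ℝ F x d) 0 := by
  have h1 : HasDerivAt (fun t : ℝ => x + t • d) d 0 := by
    simpa using (((hasDerivAt_id (0:ℝ)).smul_const d).const_add x)
  have h2 := (hdiff (x + (0:ℝ) • d)).hasFDerivAt.comp_hasDerivAt 0 h1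
  simp only [zero_smul, add_zero] at h2
  exact h2

theorem stmt6 (n : ℕ) (F : EuclideanSpace ℝ (Fin n) → ℝ)
    (hdiff : Differentiable ℝ F)
    (hmono : ∀ x ∈ cube n, ∀ y ∈ cube n, (∀ i, x i ≤ y i) → F x ≤ F y)
    (hup : ∀ x ∈ cube n, ∀ d : EuclideanSpace ℝ (Fin n), (∀ i, 0 ≤ d i) →
      ConcaveOn ℝ {t : ℝ | x + t • d ∈ cube n} (fun t => F (x + t • d))) :
    ∀ x ∈ cube n, ∀ y ∈ cube n, F y - F x ≤ ⟪gradient F x, y⟫ := by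
  intro x hx y hy
  -- componentwise max
  set z : EuclideanSpace ℝ (Fin n) := WithLp.toLp 2 (fun i => max (x i) (y i)) with hzdef
  have hz : z ∈ cube n := by
    intro i
    exact ⟨le_max_of_le_left (hx i).1, max_le (hx i).2 (hy i).2⟩
  set d : EuclideanSpace ℝ (Fin n) := z - x with hddef
  have hd0 : ∀ i, 0 ≤ d i := by
    intro i
    simp only [hddef, hzdef, PiLp.sub_apply, sub_nonneg]
    exact le_max_left _ _
  have hmem : ∀ t ∈ Set.Icc (0:ℝ) 1, x + t • d ∈ cube n := by
    intro t ht i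
    have hxz : x i ≤ z i := le_max_left _ _
    have : (x + t • d) i = x i + t * (z i - x i) := by
      simp [hddef, mul_comm]
    rw [this]
    constructor
    · have : 0 ≤ t * (z i - x i) := mul_nonneg ht.1 (by linarith)
      linarith [(hx i).1]
    · have h1 : t * (z i - x i) ≤ 1 * (z i - x i) :=
        mul_le_mul_of_nonneg_right ht.2 (by linarith)
      have := (hz i).2
      nlinarith
  -- concavity along the segment
  have hcon := hup x hx d hd0
  set g : ℝ → ℝ := fun t => F (x + t • d) with hgdef
  have key : ∀ t ∈ Set.Ioc (0:ℝ) 1, g 1 - g 0 ≤ (g t - g 0) / t := by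
    intro t ht
    have h0 : (0:ℝ) ∈ {t : ℝ | x + t • d ∈ cube n} := hmem 0 (by norm_num)
    have h1 : (1:ℝ) ∈ {t : ℝ | x + t • d ∈ cube n} := hmem 1 (by norm_num)
    have hcomb : (1 - t) • g 0 + t • g 1 ≤ g ((1 - t) • (0:ℝ) + t • (1:ℝ)) :=
      hcon.2 h0 h1 (by linarith [ht.2]) ht.1.le (by ring)
    have ht' : (1 - t) • (0:ℝ) + t • (1:ℝ) = t := by simp
    rw [ht'] at hcomb
    simp only [smul_eq_mul] at hcomb
    rw [le_div_iff₀ ht.1]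
    nlinarith
  -- derivative at 0
  have hder := line_deriv F hdiff x d
  have hslope : Filter.Tendsto (fun t => (g t - g 0) / t) (nhdsWithin 0 (Set.Ioi 0))
      (nhds (fderiv ℝ F x d)) := by
    have := hasDerivAt_iff_tendsto_slope.1 hder
    have h2 := this.mono_left (nhdsWithin_mono 0 (by intro t ht; exact ne_of_gt ht))
    refine h2.congr ?_
    intro t
    simp [slope, hgdef, vsub_eq_sub, div_eq_inv_mul]
  have hD : g 1 - g 0 ≤ fderiv ℝ F x d := by
    refine ge_of_tendsto hslope ?_
    filter_upwards [Ioc_mem_nhdsGT (by norm_num : (0:ℝ) < 1)] with t ht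
    exact key t ht
  -- gradient components are nonnegative
  have hgrad0 : ∀ i, 0 ≤ gradient F x i := by
    intro i
    set e : EuclideanSpace ℝ (Fin n) := EuclideanSpace.single i (1:ℝ) with hedef
    have hcomp : gradient F x i = fderiv ℝ F x e := by
      have := inner_grad F x e
      rwa [hedef, real_inner_comm, EuclideanSpace.inner_single_left, map_one, one_mul] at this
    rw [hcomp]
    have hder2 := line_deriv F hdiff x e
    rcases lt_or_eq_of_le (hx i).2 with hlt | heq
    · -- x i < 1 : use right slopes
      have hmem2 : ∀ t ∈ Set.Ioc (0:ℝ) (1 - x i), x + t • e ∈ cube n := by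
        intro t ht j
        by_cases hji : j = i
        · subst hji
          have : (x + t • e) j = x j + t := by simp [hedef, EuclideanSpace.single_apply]
          rw [this]
          constructor
          · linarith [(hx j).1, ht.1]
          · linarith [ht.2]
        · have : (x + t • e) j = x j := by
            simp [hedef, EuclideanSpace.single_apply, hji]
          rw [this]; exact hx j
      have hslope2 : Filter.Tendsto (fun t => (F (x + t • e) - F x) / t)
          (nhdsWithin 0 (Set.Ioi 0)) (nhds (fderiv ℝ F x e)) := by
        have := hasDerivAt_iff_tendsto_slope.1 hder2
        have h2 := this.mono_left (nhdsWithin_mono 0 (by intro t ht; exact ne_of_gt ht))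
        refine h2.congr ?_
        intro t
        simp [slope, vsub_eq_sub, div_eq_inv_mul]
      refine ge_of_tendsto hslope2 ?_
      filter_upwards [Ioc_mem_nhdsGT (by linarith : (0:ℝ) < 1 - x i)] with t ht
      have hle : ∀ j, x j ≤ (x + t • e) j := by
        intro j
        by_cases hji : j = i
        · subst hji; simp [hedef, EuclideanSpace.single_apply]; linarith [ht.1]
        · simp [hedef, EuclideanSpace.single_apply, hji]
      have hm := hmono x hx _ (hmem2 t ht) hle
      exact div_nonneg (by linarith) ht.1.le
    · -- x i = 1 : use left slopes
      have hmem2 : ∀ t ∈ Set.Ico (-(1:ℝ)) 0, x + t • e ∈ cube n := by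
        intro t ht j
        by_cases hji : j = i
        · subst hji
          have : (x + t • e) j = x j + t := by simp [hedef, EuclideanSpace.single_apply]
          rw [this, ← heq]
          constructor <;> linarith [ht.1, ht.2]
        · have : (x + t • e) j = x j := by
            simp [hedef, EuclideanSpace.single_apply, hji]
          rw [this]; exact hx j
      have hslope2 : Filter.Tendsto (fun t => (F (x + t • e) - F x) / t)
          (nhdsWithin 0 (Set.Iio 0)) (nhds (fderiv ℝ F x e)) := by
        have := hasDerivAt_iff_tendsto_slope.1 hder2
        have h2 := this.mono_left (nhdsWithin_mono 0 (by intro t ht; exact ne_of_lt ht))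
        refine h2.congr ?_
        intro t
        simp [slope, vsub_eq_sub, div_eq_inv_mul]
      refine ge_of_tendsto hslope2 ?_
      filter_upwards [Ico_mem_nhdsLT (by norm_num : -(1:ℝ) < 0)] with t ht
      have hle : ∀ j, (x + t • e) j ≤ x j := by
        intro j
        by_cases hji : j = i
        · subst hji; simp [hedef, EuclideanSpace.single_apply]; linarith [ht.2]
        · simp [hedef, EuclideanSpace.single_apply, hji]
      have hm := hmono _ (hmem2 t ht) x hx hle
      exact div_nonneg_iff.2 (Or.inr ⟨by linarith, ht.2.le⟩)
  -- assemble
  have hFy : F y ≤ F z := by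
    refine hmono y hy z hz ?_
    intro i; exact le_max_right _ _
  have hg1 : g 1 = F z := by simp [hgdef, hddef]
  have hg0 : g 0 = F x := by simp [hgdef]
  have hdy : ⟪gradient F x, d⟫ ≤ ⟪gradient F x, y⟫ := by
    simp only [PiLp.inner_apply, RCLike.inner_apply, conj_trivial]
    refine Finset.sum_le_sum fun i _ => mul_le_mul_of_nonneg_right ?_ (hgrad0 i)
    simp only [hddef, hzdef, PiLp.sub_apply, PiLp.toLp_apply]
    rcases le_total (x i) (y i) with h | h
    · simp only [max_eq_right h]; linarith [(hx i).1]
    · simp only [max_eq_left h]; linarith [(hy i).1]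
  calc F y - F x ≤ F z - F x := by linarith
    _ = g 1 - g 0 := by rw [hg1, hg0]
    _ ≤ fderiv ℝ F x d := hD
    _ = ⟪gradient F x, d⟫ := (inner_grad F x d).symm
    _ ≤ ⟪gradient F x, y⟫ := hdy
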